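/- Let R be a commutative ring, t, π₀ ∈ R, A := R[T]/(T² − t·T + π₀), π the class of T, and π̄ := t − π. Let M be a finite free A-module and let b : M × M → R be an R-bilinear form satisfying b(π·m₁, m₂) = b(m₁, π̄·m₂) for all m₁, m₂ ∈ M. Let N ⊆ M be a free A-submodule on which b restricts to a perfect pairing, i.e., the R-linear map N → Hom_R(N, R) sending n to b(n, −)|_N is bijective. Let N^⊥ := {m ∈ M : b(m, n) = 0 for all n ∈ N}. Then N^⊥ is an A-submodule of M, N^⊥ is a projective A-module, and M = N ⊕ N^⊥ as A-modules (every m ∈ M is uniquely a sum of an element of N and an element of N^⊥). -/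

import Mathlib

open Polynomial

/-- The quadratic `R`-algebra `A = R[T]/(T² − t·T + π₀)`. -/
noncomputable abbrev QuadAlg (R : Type*) [CommRing R] (t π₀ : R) : Type _ :=
  AdjoinRoot (X ^ 2 - C t * X + C π₀ : Polynomial R)

/-- The class `π` of `T` in `R[T]/(T² − t·T + π₀)`. -/
noncomputable abbrev QuadAlg.pi (R : Type*) [CommRing R] (t π₀ : R) : QuadAlg R t π₀ :=
  AdjoinRoot.root _

/-- **orthogonal splitting.**  Let `R` be a commutative ring, `t, π₀ ∈ R`,
`A := R[T]/(T² − t·T + π₀)`, `π` the class of `T`, `π̄ := t − π`.  Let `M` be a finite free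
`A`-module and `b : M × M → R` an `R`-bilinear form with `b (π • m₁, m₂) = b (m₁, π̄ • m₂)`.
Let `N ⊆ M` be a free `A`-submodule on which `b` restricts to a perfect pairing (the induced
map `N → Hom_R(N, R)` is bijective).  Then the left orthogonal complement
`N^⊥ = {m | ∀ n ∈ N, b m n = 0}` is an `A`-submodule of `M`, it is projective as an
`A`-module, and `M = N ⊕ N^⊥` (every `m ∈ M` is uniquely a sum of an element of `N` and an
element of `N^⊥`). -/
theorem stmt_17 (R : Type*) [CommRing R] (t π₀ : R)
    (M : Type*) [AddCommGroup M] [Module R M] [Module (QuadAlg R t π₀) M]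
    [IsScalarTower R (QuadAlg R t π₀) M]
    [Module.Free (QuadAlg R t π₀) M] [Module.Finite (QuadAlg R t π₀) M]
    (b : M →ₗ[R] M →ₗ[R] R)
    (hb : ∀ m₁ m₂ : M,
      b (QuadAlg.pi R t π₀ • m₁) m₂ =
        b m₁ ((algebraMap R (QuadAlg R t π₀) t - QuadAlg.pi R t π₀) • m₂))
    (N : Submodule (QuadAlg R t π₀) M) [Module.Free (QuadAlg R t π₀) N]
    (hperf : Function.Bijective
      (fun n : N => (b (n : M)).domRestrict (N.restrictScalars R))) :
    ∃ Np : Submodule (QuadAlg R t π₀) M,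
      (Np : Set M) = {x : M | ∀ n ∈ N, b x n = 0} ∧
      Module.Projective (QuadAlg R t π₀) Np ∧
      ∀ x : M, ∃! p : N × Np, ((p.1 : M) + (p.2 : M) = x) := by
  set A := QuadAlg R t π₀ with hA
  set π := QuadAlg.pi R t π₀ with hπ
  -- the orthogonal complement is closed under the action of A
  have hsmul : ∀ a : A, ∀ x : M, (∀ n ∈ N, b x n = 0) → ∀ n ∈ N, b (a • x) n = 0 := by
    intro a
    have htop : a ∈ (⊤ : Subalgebra R A) := trivial
    rw [← AdjoinRoot.adjoinRoot_eq_top (f := (X ^ 2 - C t * X + C π₀ : Polynomial R))] at htop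
    induction htop using Algebra.adjoin_induction with
    | mem y hy =>
        rcases hy with rfl
        intro x hx n hn
        rw [hb]
        exact hx _ (N.smul_mem _ hn)
    | algebraMap r =>
        intro x hx n hn
        rw [algebraMap_smul]
        rw [map_smul]
        simp [hx n hn]
    | add y z hy hz ihy ihz =>
        intro x hx n hn
        rw [add_smul, map_add, LinearMap.add_apply, ihy x hx n hn, ihz x hx n hn, add_zero]
    | mul y z hy hz ihy ihz =>
        intro x hx n hn
        rw [mul_smul]
        exact ihy _ (fun n' hn' => ihz x hx n' hn') n hn
  set Np : Submodule A M :=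
    { carrier := {x : M | ∀ n ∈ N, b x n = 0}
      add_mem' := by
        intro x y hx hy n hn
        simp only [Set.mem_setOf_eq] at *
        rw [map_add, LinearMap.add_apply, hx n hn, hy n hn, add_zero]
      zero_mem' := by intro n hn; simp
      smul_mem' := fun a x hx => hsmul a x hx } with hNp
  have huniq : ∀ x : M, ∃! p : N × Np, ((p.1 : M) + (p.2 : M) = x) := by
    intro x
    obtain ⟨n, hn⟩ := hperf.surjective ((b x).domRestrict (N.restrictScalars R))
    have hbn : ∀ m ∈ N, b (n : M) m = b x m := by
      intro m hm
      have := congrFun (congrArg DFunLike.coe hn) ⟨m, hm⟩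
      simpa using this
    refine ⟨(n, ⟨x - n, ?_⟩), by simp, ?_⟩
    · intro m hm
      rw [map_sub, LinearMap.sub_apply, hbn m hm, sub_self]
    · rintro ⟨n', q'⟩ hq
      simp only at hq
      have hn' : n' = n := by
        apply hperf.injective
        ext m
        simp only [LinearMap.domRestrict_apply]
        have hq'0 : b (q' : M) (m : M) = 0 := q'.2 m m.2
        have : (n' : M) = x - (q' : M) := by rw [← hq]; abel
        rw [this, map_sub, LinearMap.sub_apply, hq'0, sub_zero, hbn m m.2]
      refine Prod.ext hn' (Subtype.ext ?_)
      have : (q' : M) = x - (n' : M) := by rw [← hq]; abel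
      rw [this, hn']
  have hcompl : IsCompl N Np := by
    constructor
    · rw [disjoint_iff_inf_le]
      rintro x ⟨hxN, hxNp⟩
      obtain ⟨p, hp, hup⟩ := huniq x
      have h1 := hup (⟨x, hxN⟩, 0) (by simp)
      have h2 := hup (0, ⟨x, hxNp⟩) (by simp)
      have : ((⟨x, hxN⟩ : N), (0 : Np)) = ((0 : N), (⟨x, hxNp⟩ : Np)) := h1.trans h2.symm
      have := congrArg (fun p => (p.1 : M)) this
      simpa using this
    · rw [codisjoint_iff_le_sup]
      intro x _
      obtain ⟨⟨n, q⟩, hp, _⟩ := huniq x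
      exact hp ▸ Submodule.add_mem_sup n.2 q.2
  refine ⟨Np, rfl, ?_, huniq⟩
  exact Module.Projective.of_split Np.subtype
    (Np.projectionOnto N hcompl.symm)
    (by ext x; simp)
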